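/- Fix q > 0 and let Ω := ⋃_{n≥0} (2^{2n+1}, 2^{2n+1} + 2^{-2nq}) ⊂ ℝ. Then for the sequence t_n = 2^{2n} one has |B_{t_n, 2t_n}(0) ∩ Ω| = 0 for all n, hence the lower 2-shell Minkowski content M̲_2^r(∞,Ω) = 0 for every r ∈ ℝ and the lower 2-shell Minkowski dimension at infinity equals -∞. -/

import Mathlib

open MeasureTheory Filter Set
open scoped ENNReal NNReal Topology

noncomputable section

/-- The `[a,b)`-shell centered at the origin in `ℝ`. -/
def shell1 (a b : ℝ) : Set ℝ := {x | a ≤ |x| ∧ |x| < b}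

/-- Lower φ-shell Minkowski content of `Ω ⊆ ℝ` at infinity (here `N = 1`). -/
def lowerShellContent1 (Ω : Set ℝ) (φ r : ℝ) : ℝ≥0∞ :=
  Filter.liminf (fun t : ℝ =>
    volume (shell1 t (φ * t) ∩ Ω) / ENNReal.ofReal (t ^ ((1 : ℝ) + r))) Filter.atTop

/-- Upper φ-shell Minkowski content of `Ω ⊆ ℝ` at infinity (here `N = 1`). -/
def upperShellContent1 (Ω : Set ℝ) (φ r : ℝ) : ℝ≥0∞ :=
  Filter.limsup (fun t : ℝ =>
    volume (shell1 t (φ * t) ∩ Ω) / ENNReal.ofReal (t ^ ((1 : ℝ) + r))) Filter.atTop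

/-- Lower φ-shell Minkowski dimension of `Ω ⊆ ℝ` at infinity. -/
def lowerShellDim1 (Ω : Set ℝ) (φ : ℝ) : EReal :=
  sInf ((fun r : ℝ => (r : EReal)) '' {r : ℝ | lowerShellContent1 Ω φ r = 0})

/-- Upper φ-shell Minkowski dimension of `Ω ⊆ ℝ` at infinity. -/
def upperShellDim1 (Ω : Set ℝ) (φ : ℝ) : EReal :=
  sInf ((fun r : ℝ => (r : EReal)) '' {r : ℝ | upperShellContent1 Ω φ r = 0})

/-- The quasiperiodic union of intervals from Example `donji_kontraprim`. -/
def qpSet (q : ℝ) : Set ℝ :=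
  ⋃ n : ℕ, Ioo ((2 : ℝ) ^ (2 * n + 1)) ((2 : ℝ) ^ (2 * n + 1) + (2 : ℝ) ^ (-(2 * (n : ℝ) * q)))

lemma qp_shell_empty (q : ℝ) (hq : 0 < q) (n : ℕ) :
    shell1 ((2 : ℝ) ^ (2 * n)) (2 * (2 : ℝ) ^ (2 * n)) ∩ qpSet q = ∅ := by
  ext x
  simp only [mem_inter_iff, mem_empty_iff_false, iff_false, not_and, shell1, mem_setOf_eq,
    qpSet, mem_iUnion, mem_Ioo, not_exists]
  rintro ⟨h1, h2⟩ m hm1 hm2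
  have hx0 : (0 : ℝ) < x := lt_trans (by positivity) hm1
  rw [abs_of_pos hx0] at h1 h2
  have h2' : x < (2 : ℝ) ^ (2 * n + 1) := by rw [pow_succ, mul_comm]; exact h2
  -- exponent bound ≤ 1
  have hle1 : (2 : ℝ) ^ (-(2 * (m : ℝ) * q)) ≤ 1 := by
    refine Real.rpow_le_one_of_one_le_of_nonpos one_le_two ?_
    have : (0:ℝ) ≤ 2 * (m : ℝ) * q := by positivity
    linarith
  have hx2 : x < (2 : ℝ) ^ (2 * m + 2) := by
    calc x < (2 : ℝ) ^ (2 * m + 1) + 1 := lt_of_lt_of_le hm2 (by linarith)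
    _ ≤ (2 : ℝ) ^ (2 * m + 1) + (2 : ℝ) ^ (2 * m + 1) := by
        have : (1 : ℝ) ≤ (2 : ℝ) ^ (2 * m + 1) := one_le_pow₀ one_le_two
        linarith
    _ = (2 : ℝ) ^ (2 * m + 2) := by ring
  have hmn : 2 * m + 1 < 2 * n + 1 := by
    have := lt_trans hm1 h2'
    exact (pow_lt_pow_iff_right₀ one_lt_two).mp this
  have : 2 * m + 2 ≤ 2 * n := by omega
  have : (2 : ℝ) ^ (2 * m + 2) ≤ (2 : ℝ) ^ (2 * n) :=
    pow_le_pow_right₀ one_le_two this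
  linarith

theorem qpSet_lower_two_shell_degenerate (q : ℝ) (hq : 0 < q) :
    (∀ n : ℕ, volume (shell1 ((2 : ℝ) ^ (2 * n)) (2 * (2 : ℝ) ^ (2 * n)) ∩ qpSet q) = 0) ∧
    (∀ r : ℝ, lowerShellContent1 (qpSet q) 2 r = 0) ∧
    lowerShellDim1 (qpSet q) 2 = ⊥ := by
  have hvol : ∀ n : ℕ,
      volume (shell1 ((2 : ℝ) ^ (2 * n)) (2 * (2 : ℝ) ^ (2 * n)) ∩ qpSet q) = 0 := by
    intro n; rw [qp_shell_empty q hq n]; simp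
  have hcontent : ∀ r : ℝ, lowerShellContent1 (qpSet q) 2 r = 0 := by
    intro r
    refine le_antisymm ?_ zero_le
    refine Filter.liminf_le_of_frequently_le' ?_
    rw [Filter.frequently_atTop]
    intro a
    obtain ⟨n, hn⟩ : ∃ n : ℕ, a ≤ (2 : ℝ) ^ (2 * n) := by
      refine ⟨⌈a⌉₊, (Nat.le_ceil a).trans ?_⟩
      calc ((⌈a⌉₊ : ℝ)) ≤ 2 ^ ⌈a⌉₊ := by
            exact_mod_cast (Nat.lt_two_pow_self (n := ⌈a⌉₊)).le
        _ ≤ 2 ^ (2 * ⌈a⌉₊) := pow_le_pow_right₀ one_le_two (by omega)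
    refine ⟨(2 : ℝ) ^ (2 * n), hn, ?_⟩
    simp [hvol n, ENNReal.zero_div]
  refine ⟨hvol, hcontent, ?_⟩
  rw [EReal.eq_bot_iff_forall_lt]
  intro y
  have h1 : lowerShellDim1 (qpSet q) 2 ≤ ((y - 1 : ℝ) : EReal) :=
    sInf_le ⟨y - 1, hcontent _, rfl⟩
  exact lt_of_le_of_lt h1 (by exact_mod_cast sub_one_lt y)
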